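/- Let L ≥ 1 and let r : ℤ → ℂ with r(−k) = conj(r(k)) be such that the L×L Hermitian Toeplitz matrix R_L with entries (R_L)_{jk} = r(j−k) is positive definite (so that each leading principal block R_l, 1 ≤ l ≤ L, is positive definite). For 0 ≤ l ≤ L−1 set σ_l² = 1 / ( (R_{l+1}^{−1})_{1,1} ) > 0 and u_l = σ_l² (R_{l+1}^{−1})^T e_1 ∈ ℂ^{l+1}, with entries indexed u_l(0), …, u_l(l), where e_1 = (1,0,…,0)^T ∈ ℂ^{l+1}; then u_l(0) = 1. Let A be the L×L upper-triangular matrix with A_{jj} = 1 for all j, A_{ij} = u_{j−1}(j−i) for 1 ≤ i < j ≤ L, and A_{ij} = 0 for i > j. Then R_L^{−1} = A · diag( 1/σ_0², 1/σ_1², …, 1/σ_{L−1}² ) · A^H. -/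

import Mathlib

open Matrix
open scoped ComplexOrder

/-- The `n × n` Hermitian Toeplitz matrix with symbol sequence `r`:
`(T r n)_{jk} = r (j − k)`. -/
def Tmat (r : ℤ → ℂ) (n : ℕ) : Matrix (Fin n) (Fin n) ℂ :=
  Matrix.of fun j k => r ((j : ℤ) - (k : ℤ))

/-- `σ_l² = 1 / ((R_{l+1}⁻¹)_{1,1})` (`0`-based: the `(0,0)` entry). -/
noncomputable def sigSq (r : ℤ → ℂ) (l : ℕ) : ℂ :=
  1 / ((Tmat r (l + 1))⁻¹ 0 0)

/-- `u_l = σ_l² (R_{l+1}⁻¹)ᵀ e₁` : the reversed Szegő prediction coefficient vector. -/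
noncomputable def uvec (r : ℤ → ℂ) (l : ℕ) : Fin (l + 1) → ℂ :=
  sigSq r l • ((Tmat r (l + 1))⁻¹)ᵀ.mulVec (Pi.single 0 1)

/-- The `L × L` unit upper-triangular matrix with `A_{ij} = u_j (j − i)` for `i ≤ j`. -/
noncomputable def Amat (r : ℤ → ℂ) (L : ℕ) : Matrix (Fin L) (Fin L) ℂ :=
  Matrix.of fun i j =>
    if h : (i : ℕ) ≤ (j : ℕ) then uvec r (j : ℕ) ⟨(j : ℕ) - (i : ℕ), by omega⟩ else 0

-- Hermitian
lemma Tmat_isHermitian (r : ℤ → ℂ) (hsym : ∀ k : ℤ, r (-k) = starRingEnd ℂ (r k)) (n : ℕ) :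
    (Tmat r n).IsHermitian := by
  ext j k
  simp only [conjTranspose_apply, Tmat, Matrix.of_apply]
  rw [show star (r ((k:ℤ) - (j:ℤ))) = starRingEnd ℂ (r ((k:ℤ) - (j:ℤ))) from rfl, ← hsym]
  congr 1
  ring

-- submatrix
lemma Tmat_submatrix (r : ℤ → ℂ) {m n : ℕ} (h : m ≤ n) :
    Tmat r m = (Tmat r n).submatrix (Fin.castLE h) (Fin.castLE h) := rfl

-- PosDef of injective submatrix
lemma posDef_submatrix {n m : ℕ} {M : Matrix (Fin n) (Fin n) ℂ} (hM : M.PosDef)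
    (e : Fin m → Fin n) (he : Function.Injective e) : (M.submatrix e e).PosDef := by
  refine posDef_iff_dotProduct_mulVec.2 ⟨hM.1.submatrix e, fun x hx => ?_⟩
  set B : Matrix (Fin n) (Fin m) ℂ := (1 : Matrix (Fin n) (Fin n) ℂ).submatrix id e with hB
  have hM1 : M = 1 * M * 1 := by simp
  have hsub : M.submatrix e e = Bᴴ * M * B := by
    conv_lhs => rw [hM1]
    rw [Matrix.submatrix_mul (he₂ := Function.bijective_id),
      Matrix.submatrix_mul (he₂ := Function.bijective_id), Matrix.submatrix_id_id]
    have : Bᴴ = (1 : Matrix (Fin n) (Fin n) ℂ).submatrix e id := by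
      rw [hB, conjTranspose_submatrix, conjTranspose_one]
    rw [this]
  have hy : ∀ i : Fin m, (B *ᵥ x) (e i) = x i := by
    intro i
    simp only [hB, Matrix.mulVec, dotProduct, Matrix.submatrix_apply, id_eq, Matrix.one_apply]
    rw [Finset.sum_eq_single i]
    · simp
    · intro b _ hbi
      rw [if_neg (fun hc => hbi (he hc).symm)]
      exact zero_mul _
    · simp
  have hyne : B *ᵥ x ≠ 0 := by
    intro hc
    apply hx
    ext i
    have := congrFun hc (e i)
    rw [hy i] at this
    exact this
  have hpos := hM.dotProduct_mulVec_pos hyne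
  rw [hsub]
  have key : star x ⬝ᵥ (Bᴴ * M * B) *ᵥ x = star (B *ᵥ x) ⬝ᵥ M *ᵥ (B *ᵥ x) := by
    simp [Matrix.dotProduct_mulVec, Matrix.star_mulVec, Matrix.vecMul_vecMul, Matrix.mul_assoc]
  rw [key]
  exact hpos

lemma Tmat_block_posDef {L : ℕ} {r : ℤ → ℂ} (hpd : (Tmat r L).PosDef) {m : ℕ} (h : m ≤ L) :
    (Tmat r m).PosDef := by
  rw [Tmat_submatrix r h]
  exact posDef_submatrix hpd _ (Fin.castLE_injective h)

lemma inv_00 {r : ℤ → ℂ} {l : ℕ} (hpd : (Tmat r (l + 1)).PosDef) :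
    0 < ((Tmat r (l + 1))⁻¹ 0 0).re ∧ ((Tmat r (l + 1))⁻¹ 0 0).im = 0 := by
  have hipd : ((Tmat r (l + 1))⁻¹).PosDef := hpd.inv
  constructor
  · have h1 : (Pi.single 0 1 : Fin (l + 1) → ℂ) ≠ 0 := by
      intro hc
      have := congrFun hc 0
      simp at this
    have := hipd.re_dotProduct_pos h1
    convert this using 2
    simp [dotProduct, Matrix.mulVec, Pi.single_apply]
  · have hH := hipd.isHermitian
    have := congrFun (congrFun hH 0) 0
    simp only [conjTranspose_apply] at this
    have him := congrArg Complex.im this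
    simp at him
    linarith [him]

lemma sigSq_pos {r : ℤ → ℂ} {l : ℕ} (hpd : (Tmat r (l + 1)).PosDef) :
    0 < (sigSq r l).re ∧ (sigSq r l).im = 0 := by
  obtain ⟨hre, him⟩ := inv_00 hpd
  set c := (Tmat r (l + 1))⁻¹ 0 0 with hc
  have hcr : c = (c.re : ℂ) := Complex.ext rfl (by simpa using him)
  rw [sigSq, ← hc, hcr]
  norm_num
  exact hre

lemma sigSq_ne_zero {r : ℤ → ℂ} {l : ℕ} (hpd : (Tmat r (l + 1)).PosDef) : sigSq r l ≠ 0 := by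
  obtain ⟨hre, _⟩ := sigSq_pos hpd
  intro hc
  rw [hc] at hre
  simp at hre

lemma uvec_zero {r : ℤ → ℂ} {l : ℕ} (hpd : (Tmat r (l + 1)).PosDef) : uvec r l 0 = 1 := by
  obtain ⟨hre, him⟩ := inv_00 hpd
  have hne : (Tmat r (l + 1))⁻¹ 0 0 ≠ 0 := by
    intro hc
    rw [hc] at hre
    simp at hre
  simp only [uvec, Pi.smul_apply, smul_eq_mul, Matrix.mulVec, dotProduct, Matrix.transpose_apply]
  rw [Finset.sum_eq_single 0]
  · simp [sigSq, div_mul_cancel₀, one_div, inv_mul_cancel₀ hne]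
  · intro b _ hb
    simp [Pi.single_apply, hb]
  · simp

lemma key_mulVec {r : ℤ → ℂ} {l : ℕ} (hpd : (Tmat r (l + 1)).PosDef) :
    (Tmat r (l + 1))ᵀ *ᵥ uvec r l = sigSq r l • (Pi.single 0 1 : Fin (l + 1) → ℂ) := by
  have hdet : IsUnit (Tmat r (l + 1)).det := (Matrix.isUnit_iff_isUnit_det _).1 hpd.isUnit
  rw [uvec, Matrix.mulVec_smul, Matrix.mulVec_mulVec, ← Matrix.transpose_mul,
    Matrix.nonsing_inv_mul _ hdet, Matrix.transpose_one, Matrix.one_mulVec]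

/-- componentwise: for `k ≤ l`, `∑ b, r (b - k) * u_l b = if k = 0 then σ² else 0`. -/
lemma key_sum {r : ℤ → ℂ} {l : ℕ} (hpd : (Tmat r (l + 1)).PosDef) (k : Fin (l + 1)) :
    ∑ b : Fin (l + 1), r ((b : ℤ) - (k : ℤ)) * uvec r l b
      = if k = 0 then sigSq r l else 0 := by
  have := congrFun (key_mulVec hpd) k
  simp only [Matrix.mulVec, dotProduct, Matrix.transpose_apply, Tmat, Matrix.of_apply,
    Pi.smul_apply, smul_eq_mul, Pi.single_apply] at this
  rw [this]
  by_cases hk : k = 0 <;> simp [hk]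

lemma TA_entry {L : ℕ} {r : ℤ → ℂ} (hpd : (Tmat r L).PosDef) (p j : Fin L)
    (hpj : (p : ℕ) ≤ (j : ℕ)) :
    (Tmat r L * Amat r L) p j = if p = j then sigSq r (j : ℕ) else 0 := by
  have hj1 : (j : ℕ) + 1 ≤ L := j.isLt
  have hpdj : (Tmat r ((j : ℕ) + 1)).PosDef := Tmat_block_posDef hpd hj1
  set f : ℕ → ℂ := fun q =>
    if h : q < L then Tmat r L p ⟨q, h⟩ * Amat r L ⟨q, h⟩ j else 0 with hf
  rw [Matrix.mul_apply]
  have h1 : ∑ q : Fin L, Tmat r L p q * Amat r L q j = ∑ q ∈ Finset.range L, f q := by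
    rw [← Fin.sum_univ_eq_sum_range]
    apply Finset.sum_congr rfl
    intro q _
    simp [hf, q.isLt]
  have h2 : ∑ q ∈ Finset.range L, f q = ∑ q ∈ Finset.range ((j : ℕ) + 1), f q := by
    refine (Finset.sum_subset (Finset.range_subset_range.2 hj1) ?_).symm
    intro q hq hq'
    simp only [Finset.mem_range] at hq hq'
    have hqL : q < L := hq
    have hqj : ¬ q ≤ (j : ℕ) := by omega
    simp only [hf, dif_pos hqL, Amat, Matrix.of_apply]
    rw [dif_neg hqj]
    exact mul_zero _
  have h3 : ∑ q ∈ Finset.range ((j : ℕ) + 1), f q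
      = ∑ b ∈ Finset.range ((j : ℕ) + 1), f ((j : ℕ) + 1 - 1 - b) :=
    (Finset.sum_range_reflect f ((j : ℕ) + 1)).symm
  have h4 : ∑ b ∈ Finset.range ((j : ℕ) + 1), f ((j : ℕ) + 1 - 1 - b)
      = ∑ b : Fin ((j : ℕ) + 1), r ((b : ℤ) - (((j : ℕ) - (p : ℕ) : ℕ) : ℤ)) * uvec r (j : ℕ) b := by
    rw [← Fin.sum_univ_eq_sum_range (fun b => f ((j : ℕ) + 1 - 1 - b))]
    apply Finset.sum_congr rfl
    intro b _
    have hb : (b : ℕ) ≤ (j : ℕ) := by omega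
    have hlt : (j : ℕ) + 1 - 1 - (b : ℕ) < L := by omega
    have hle : (j : ℕ) + 1 - 1 - (b : ℕ) ≤ (j : ℕ) := by omega
    simp only [hf, dif_pos hlt, Amat, Matrix.of_apply, dif_pos hle, Tmat]
    congr 1
    · congr 1
      omega
    · congr 1
      rw [Fin.ext_iff]
      simp only []
      omega
  rw [h1, h2, h3, h4, key_sum hpdj ⟨(j : ℕ) - (p : ℕ), by omega⟩]
  by_cases hp : p = j
  · have : ((j : ℕ) - (p : ℕ)) = 0 := by omega
    simp [hp, this, Fin.ext_iff]
  · have : ¬ (((j : ℕ) - (p : ℕ)) = 0) := by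
      rw [Fin.ext_iff] at hp; omega
    simp [hp, Fin.ext_iff, this]

lemma AHTA {L : ℕ} {r : ℤ → ℂ} (hsym : ∀ k : ℤ, r (-k) = starRingEnd ℂ (r k))
    (hpd : (Tmat r L).PosDef) :
    (Amat r L)ᴴ * Tmat r L * Amat r L
      = Matrix.diagonal (fun l : Fin L => sigSq r (l : ℕ)) := by
  set M := (Amat r L)ᴴ * Tmat r L * Amat r L with hM
  set D := Matrix.diagonal (fun l : Fin L => sigSq r (l : ℕ)) with hD
  have hT := Tmat_isHermitian r hsym L
  have hMH : Mᴴ = M := by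
    rw [hM]
    simp only [Matrix.conjTranspose_mul, Matrix.conjTranspose_conjTranspose, hT.eq]
    rw [Matrix.mul_assoc]
  have hle : ∀ i j : Fin L, (i : ℕ) ≤ (j : ℕ) → M i j = D i j := by
    intro i j hij
    have key : ∀ p : Fin L,
        (Amat r L)ᴴ i p * (Tmat r L * Amat r L) p j
          = if p = j then (if i = j then sigSq r (j : ℕ) else 0) else 0 := by
      intro p
      by_cases hpi : (p : ℕ) ≤ (i : ℕ)
      · rw [TA_entry hpd p j (le_trans hpi hij)]
        by_cases hpj : p = j
        · have hij' : i = j := by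
            rw [Fin.ext_iff] at hpj ⊢
            omega
          have hpdi : (Tmat r ((j : ℕ) + 1)).PosDef := Tmat_block_posDef hpd j.isLt
          have h0 : (⟨(j : ℕ) - (j : ℕ), by omega⟩ : Fin ((j : ℕ) + 1)) = 0 := by
            rw [Fin.ext_iff]
            simp
          simp only [hpj, hij', if_pos rfl, Matrix.conjTranspose_apply, Amat, Matrix.of_apply,
            dif_pos (le_refl (j : ℕ)), h0, uvec_zero hpdi]
          simp
        · simp [hpj]
      · have hA0 : (Amat r L)ᴴ i p = 0 := by
          simp only [Matrix.conjTranspose_apply, Amat, Matrix.of_apply]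
          rw [dif_neg hpi]
          simp
        rw [hA0, zero_mul]
        have : ¬ (p = j ∧ i = j) := by
          rintro ⟨rfl, rfl⟩
          exact hpi (le_refl _)
        by_cases hpj : p = j
        · have : ¬ i = j := fun hc => this ⟨hpj, hc⟩
          simp [hpj, this]
        · simp [hpj]
    rw [hM, Matrix.mul_assoc, Matrix.mul_apply]
    rw [Finset.sum_congr rfl (fun p _ => key p)]
    rw [Finset.sum_ite_eq' Finset.univ j (fun _ => if i = j then sigSq r (j : ℕ) else 0)]
    simp only [Finset.mem_univ, if_pos]
    by_cases hij' : i = j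
    · simp [hD, hij', Matrix.diagonal_apply]
    · simp [hD, hij', Matrix.diagonal_apply, fun hc => hij' hc]
  ext i j
  rcases le_or_gt (i : ℕ) (j : ℕ) with h | h
  · exact hle i j h
  · have hji := hle j i (le_of_lt h)
    have hij_ne : ¬ i = j := by
      rw [Fin.ext_iff]
      omega
    have hji_ne : ¬ (j : Fin L) = i := by
      rw [Fin.ext_iff]
      omega
    have : M i j = starRingEnd ℂ (M j i) := by
      conv_lhs => rw [← hMH]
      rfl
    rw [this, hji]
    simp [hD, Matrix.diagonal_apply, hij_ne, hji_ne]

lemma Amat_det {L : ℕ} {r : ℤ → ℂ} (hpd : (Tmat r L).PosDef) : (Amat r L).det = 1 := by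
  have htri : (Amat r L).BlockTriangular id := by
    intro i j hij
    have hij' : (j : ℕ) < (i : ℕ) := hij
    simp only [Amat, Matrix.of_apply]
    rw [dif_neg (by omega)]
  rw [Matrix.det_of_upperTriangular htri]
  apply Finset.prod_eq_one
  intro i _
  have hpdi : (Tmat r ((i : ℕ) + 1)).PosDef := Tmat_block_posDef hpd i.isLt
  have h0 : (⟨(i : ℕ) - (i : ℕ), by omega⟩ : Fin ((i : ℕ) + 1)) = 0 := by
    rw [Fin.ext_iff]
    simp
  simp only [Amat, Matrix.of_apply, dif_pos (le_refl (i : ℕ)), h0, uvec_zero hpdi]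

/-- Cholesky-type factorization of the inverse of a positive
definite Hermitian Toeplitz matrix via Szegő prediction polynomials:
`R_L⁻¹ = A · diag(1/σ_0², …, 1/σ_{L−1}²) · Aᴴ`, with `σ_l² > 0` real and `u_l(0) = 1`. -/
theorem toeplitz_inverse_cholesky (L : ℕ) (hL : 1 ≤ L) (r : ℤ → ℂ)
    (hsym : ∀ k : ℤ, r (-k) = starRingEnd ℂ (r k))
    (hpd : (Tmat r L).PosDef) :
    (∀ l : ℕ, l < L → 0 < (sigSq r l).re ∧ (sigSq r l).im = 0) ∧
    (∀ l : ℕ, l < L → uvec r l 0 = 1) ∧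
    (Tmat r L)⁻¹ =
      Amat r L * Matrix.diagonal (fun l : Fin L => 1 / sigSq r (l : ℕ)) * (Amat r L)ᴴ := by
  refine ⟨fun l hl => sigSq_pos (Tmat_block_posDef hpd hl),
    fun l hl => uvec_zero (Tmat_block_posDef hpd hl), ?_⟩
  have hdA : IsUnit (Amat r L).det := by
    rw [Amat_det hpd]
    exact isUnit_one
  have hdAH : IsUnit ((Amat r L)ᴴ).det := by
    rw [Matrix.det_conjTranspose, Amat_det hpd]
    simp
  have h := AHTA hsym hpd
  have hT_eq : Tmat r L = ((Amat r L)ᴴ)⁻¹ * Matrix.diagonal (fun l : Fin L => sigSq r (l : ℕ)) * (Amat r L)⁻¹ := by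
    rw [← h]
    rw [Matrix.mul_assoc ((Amat r L)ᴴ) (Tmat r L) (Amat r L),
      Matrix.nonsing_inv_mul_cancel_left _ _ hdAH,
      Matrix.mul_nonsing_inv_cancel_right _ _ hdA]
  have hDinv : (Matrix.diagonal (fun l : Fin L => sigSq r (l : ℕ)))⁻¹
      = Matrix.diagonal (fun l : Fin L => 1 / sigSq r (l : ℕ)) := by
    apply Matrix.inv_eq_right_inv
    rw [Matrix.diagonal_mul_diagonal]
    have : (fun l : Fin L => sigSq r (l : ℕ) * (1 / sigSq r (l : ℕ)))
        = fun _ : Fin L => (1 : ℂ) := by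
      funext l
      have hne : sigSq r (l : ℕ) ≠ 0 := sigSq_ne_zero (Tmat_block_posDef hpd l.isLt)
      field_simp
    rw [this, Matrix.diagonal_one]
  rw [hT_eq, Matrix.mul_inv_rev, Matrix.mul_inv_rev,
    Matrix.nonsing_inv_nonsing_inv _ hdA, Matrix.nonsing_inv_nonsing_inv _ hdAH, hDinv,
    Matrix.mul_assoc]
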